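/- arXiv:1101.3445 — 4 statements merged into one kernel-verified Lean document; each statement's English description precedes it below -/
import Mathlib

section
/- If a compact invariant set Λ of a flow contains a hyperbolic singularity σ and a point x with x ∈ W^s(σ) ∩ W^u(σ) and x ≠ σ, and Λ = {σ} ∪ O(x) (the closure-free union of σ with the orbit of x), then the flow restricted to Λ is not topologically mixing. -/
open Filter Set Metric TensorProduct

section Defs
variable {M : Type*}

/-- A continuous flow on a topological space. -/
def IsFlow [TopologicalSpace M] (φ : ℝ → M → M) : Prop :=
  Continuous (fun p : ℝ × M => φ p.1 p.2) ∧ (∀ x, φ 0 x = x) ∧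
    ∀ s t x, φ (s + t) x = φ s (φ t x)

def InvariantSet (φ : ℝ → M → M) (Λ : Set M) : Prop :=
  ∀ t : ℝ, ∀ x ∈ Λ, φ t x ∈ Λ

def orbitOf (φ : ℝ → M → M) (p : M) : Set M := Set.range fun t : ℝ => φ t p

/-- A critical point: singularity or periodic point. -/
def IsCriticalPt (φ : ℝ → M → M) (p : M) : Prop := ∃ T : ℝ, 0 < T ∧ φ T p = p

/-- `K` is a spacing constant for `ε`: any `K`-spaced weak specification
(two orbit segments of points of `Λ`, parametrized over `[a₁,b₁]` and `[a₂,b₂]`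
with `a₂ ≥ b₁ + K`) is `ε`-shadowed by a point of `Λ`. -/
def SpecConst [MetricSpace M] (φ : ℝ → M → M) (Λ : Set M) (ε K : ℝ) : Prop :=
  ∀ a₁ b₁ a₂ b₂ : ℝ, a₁ ≤ b₁ → a₂ ≤ b₂ → b₁ + K ≤ a₂ →
    ∀ x ∈ Λ, ∀ y ∈ Λ, ∃ z ∈ Λ,
      (∀ t ∈ Set.Icc a₁ b₁, dist (φ t z) (φ (t - a₁) x) < ε) ∧
      (∀ t ∈ Set.Icc a₂ b₂, dist (φ t z) (φ (t - a₂) y) < ε)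

/-- The weak specification property on `Λ`. -/
def WeakSpec [MetricSpace M] (φ : ℝ → M → M) (Λ : Set M) : Prop :=
  ∀ ε : ℝ, 0 < ε → ∃ K : ℝ, 0 < K ∧ SpecConst φ Λ ε K

/-- Topological mixing of the flow restricted to `Λ`. -/
def TopMixingOn [TopologicalSpace M] (φ : ℝ → M → M) (Λ : Set M) : Prop :=
  ∀ U V : Set M, IsOpen U → IsOpen V → (U ∩ Λ).Nonempty → (V ∩ Λ).Nonempty →
    ∃ N : ℝ, 0 < N ∧ ∀ t : ℝ, N ≤ t → (φ t '' (V ∩ Λ) ∩ (U ∩ Λ)).Nonempty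

/-- Topological transitivity of the flow restricted to `Λ`. -/
def TopTransOn [TopologicalSpace M] (φ : ℝ → M → M) (Λ : Set M) : Prop :=
  ∀ U V : Set M, IsOpen U → IsOpen V → (U ∩ Λ).Nonempty → (V ∩ Λ).Nonempty →
    ∃ t : ℝ, 0 < t ∧ (φ t '' (V ∩ Λ) ∩ (U ∩ Λ)).Nonempty

/-- The stable set `W^s(σ)` of a point (e.g. a singularity). -/
def WsPoint [TopologicalSpace M] (φ : ℝ → M → M) (σ : M) : Set M :=
  {y | Filter.Tendsto (fun t : ℝ => φ t y) Filter.atTop (nhds σ)}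

/-- The unstable set `W^u(σ)` of a point (e.g. a singularity). -/
def WuPoint [TopologicalSpace M] (φ : ℝ → M → M) (σ : M) : Set M :=
  {y | Filter.Tendsto (fun t : ℝ => φ t y) Filter.atBot (nhds σ)}

/-- The strong stable set `W^{ss}(p)`. -/
def Wss [MetricSpace M] (φ : ℝ → M → M) (p : M) : Set M :=
  {y | Filter.Tendsto (fun t : ℝ => dist (φ t y) (φ t p)) Filter.atTop (nhds 0)}

/-- The strong unstable set `W^{uu}(p)`. -/
def Wuu [MetricSpace M] (φ : ℝ → M → M) (p : M) : Set M :=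
  {y | Filter.Tendsto (fun t : ℝ => dist (φ t y) (φ t p)) Filter.atBot (nhds 0)}

/-- The stable set of the orbit of `p`: `W^s(O(p)) = ⋃_t W^{ss}(X_t(p))`. -/
def WsOrb [MetricSpace M] (φ : ℝ → M → M) (p : M) : Set M := ⋃ s : ℝ, Wss φ (φ s p)

/-- The unstable set of the orbit of `p`. -/
def WuOrb [MetricSpace M] (φ : ℝ → M → M) (p : M) : Set M := ⋃ s : ℝ, Wuu φ (φ s p)

end Defs

section VF
variable {E : Type*} [NormedAddCommGroup E] [NormedSpace ℝ E]

/-- `φ` is the flow generated by the vector field `X`. -/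
def GeneratedBy (X : E → E) (φ : ℝ → E → E) : Prop :=
  (∀ x, φ 0 x = x) ∧ (∀ s t x, φ (s + t) x = φ s (φ t x)) ∧
    ∀ x t, HasDerivAt (fun s => φ s x) (X (φ t x)) t

/-- The complexification of a continuous real-linear endomorphism. -/
noncomputable def cxEnd (A : E →L[ℝ] E) : Module.End ℂ (ℂ ⊗[ℝ] E) :=
  (A : E →ₗ[ℝ] E).baseChange ℂ

/-- A hyperbolic singularity: `X σ = 0` and no eigenvalue of `DX(σ)` has zero real part. -/
def HypSing (X : E → E) (σ : E) : Prop :=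
  X σ = 0 ∧ ∀ μ ∈ spectrum ℂ (cxEnd (fderiv ℝ X σ)), μ.re ≠ 0

/-- A hyperbolic periodic point: a regular point of period `T > 0` such that no
characteristic multiplier (eigenvalue of `Dφ_T(p)` other than the simple eigenvalue `1`
coming from the flow direction) lies on the unit circle. -/
def HypPeriodic (X : E → E) (φ : ℝ → E → E) (p : E) : Prop :=
  X p ≠ 0 ∧ ∃ T : ℝ, 0 < T ∧ φ T p = p ∧
    (∀ μ ∈ spectrum ℂ (cxEnd (fderiv ℝ (φ T) p)), μ = 1 ∨ ‖μ‖ ≠ 1) ∧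
    Module.finrank ℂ (Module.End.maxGenEigenspace (cxEnd (fderiv ℝ (φ T) p)) 1) = 1

/-- A hyperbolic critical element: hyperbolic singularity or hyperbolic periodic point. -/
def HypCritical (X : E → E) (φ : ℝ → E → E) (p : E) : Prop :=
  HypSing X p ∨ HypPeriodic X φ p

/-- A hyperbolic periodic orbit of saddle type: it has characteristic multipliers both
inside and outside the unit circle. -/
def IsSaddlePeriodic (X : E → E) (φ : ℝ → E → E) (p : E) : Prop :=
  X p ≠ 0 ∧ ∃ T : ℝ, 0 < T ∧ φ T p = p ∧
    (∃ μ ∈ spectrum ℂ (cxEnd (fderiv ℝ (φ T) p)), ‖μ‖ < 1) ∧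
    (∃ μ ∈ spectrum ℂ (cxEnd (fderiv ℝ (φ T) p)), 1 < ‖μ‖)

/-- `Crit(X)`: singularities together with periodic points. -/
def CritSet (X : E → E) (φ : ℝ → E → E) : Set E :=
  {x | X x = 0 ∨ ∃ T : ℝ, 0 < T ∧ φ T x = x}

/-- `PO(X)`: the (regular) periodic points. -/
def PerPts (X : E → E) (φ : ℝ → E → E) : Set E :=
  {x | X x ≠ 0 ∧ ∃ T : ℝ, 0 < T ∧ φ T x = x}

end VF

/-- If `Λ = {σ} ∪ O(x)` where `σ` is a hyperbolic singularity and
`x ≠ σ` satisfies `x ∈ W^s(σ) ∩ W^u(σ)`, then the flow restricted to `Λ` is not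
topologically mixing. -/
theorem not_mixing_of_single_homoclinic_orbit
    {E : Type*} [NormedAddCommGroup E] [NormedSpace ℝ E] [FiniteDimensional ℝ E]
    (X : E → E) (φ : ℝ → E → E) (hX : ContDiff ℝ 1 X)
    (hflow : IsFlow φ) (hgen : GeneratedBy X φ)
    (Λ : Set E) (hΛc : IsCompact Λ) (hΛi : InvariantSet φ Λ)
    (σ x : E) (hσ : HypSing X σ) (hx : x ∈ WsPoint φ σ ∩ WuPoint φ σ) (hxσ : x ≠ σ)
    (hΛ : Λ = {σ} ∪ orbitOf φ x) :
    ¬ TopMixingOn φ Λ := by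
  intro hmix
  obtain ⟨hxs, hxu⟩ := hx
  set r : ℝ := dist x σ / 3 with hrdef
  have hd : 0 < dist x σ := dist_pos.mpr hxσ
  have hr : 0 < r := by positivity
  -- eventually far in the future / past, the orbit is near σ
  obtain ⟨T₁, hT₁⟩ := eventually_atTop.mp (hxs.eventually (Metric.ball_mem_nhds σ hr))
  obtain ⟨T₂, hT₂⟩ := eventually_atBot.mp (hxu.eventually (Metric.ball_mem_nhds σ hr))
  -- if φ s x is in the ball around x, then s is bounded
  have key : ∀ s : ℝ, φ s x ∈ Metric.ball x r → T₂ < s ∧ s < T₁ := by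
    intro s hs
    have h1 : dist (φ s x) x < r := Metric.mem_ball.mp hs
    have h2 : ¬ (dist (φ s x) σ < r) := by
      have := dist_triangle x (φ s x) σ
      have hc : dist x (φ s x) = dist (φ s x) x := dist_comm _ _
      intro h; rw [hrdef] at *; linarith
    constructor
    · by_contra h
      exact h2 (Metric.mem_ball.mp (hT₂ s (le_of_not_gt h)))
    · by_contra h
      exact h2 (Metric.mem_ball.mp (hT₁ s (le_of_not_gt h)))
  have hxΛ : x ∈ Λ := by
    rw [hΛ]
    exact Or.inr ⟨0, hflow.2.1 x⟩
  have hxU : x ∈ Metric.ball x r ∩ Λ := ⟨Metric.mem_ball_self hr, hxΛ⟩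
  obtain ⟨N, hN0, hN⟩ := hmix (Metric.ball x r) (Metric.ball x r)
    Metric.isOpen_ball Metric.isOpen_ball ⟨x, hxU⟩ ⟨x, hxU⟩
  set t : ℝ := max N (T₁ - T₂) with htdef
  obtain ⟨z, hz1, hz2⟩ := hN t (le_max_left _ _)
  obtain ⟨w, ⟨hwU, hwΛ⟩, rfl⟩ := hz1
  rw [hΛ] at hwΛ
  rcases hwΛ with hwσ | ⟨s, rfl⟩
  · -- w = σ, but σ ∉ ball x r
    rw [Set.mem_singleton_iff] at hwσ
    subst hwσ
    have hb : dist w x < r := Metric.mem_ball.mp hwU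
    rw [dist_comm] at hb
    rw [hrdef] at hb; linarith
  · have hs := key s hwU
    have hflows : φ t (φ s x) = φ (t + s) x := (hflow.2.2 t s x).symm
    rw [hflows] at hz2
    have hts := key (t + s) hz2.1
    have htge : T₁ - T₂ ≤ t := le_max_right _ _
    linarith [hs.1, hs.2, hts.1, hts.2]
end

section
/- In dimension 2, Morse–Smale flows cannot be topologically mixing; consequently, on a closed surface no flow in the C^1-open dense set of Morse–Smale flows has the weak specification property, so flows with the robust weak specification property can exist only on manifolds of dimension at least 3. -/
open Filter Set Metric TensorProduct

/-- The nonwandering set of a flow. -/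
def NonWandering {M : Type*} [TopologicalSpace M] (φ : ℝ → M → M) : Set M :=
  {x | ∀ U : Set M, IsOpen U → x ∈ U → ∀ T : ℝ, ∃ t : ℝ, T ≤ t ∧ (φ t '' U ∩ U).Nonempty}

/-- A Morse–Smale-like flow: the nonwandering set is the union of the orbits of finitely
many critical points (singularities and periodic orbits). -/
def MorseSmaleLike {M : Type*} [TopologicalSpace M] (φ : ℝ → M → M) : Prop :=
  ∃ F : Finset M, (∀ p ∈ F, IsCriticalPt φ p) ∧
    NonWandering φ = ⋃ p ∈ F, orbitOf φ p

section Aux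

variable {M : Type*} [MetricSpace M]

lemma orbit_eq_of_flow (φ : ℝ → M → M)
    (hadd : ∀ s t x, φ (s + t) x = φ s (φ t x)) {p q : M} {a b : ℝ}
    (h : φ a p = φ b q) : orbitOf φ p = orbitOf φ q := by
  ext y
  constructor
  · rintro ⟨t, rfl⟩
    refine ⟨t - a + b, ?_⟩
    show φ (t - a + b) q = φ t p
    rw [hadd, ← h, ← hadd, sub_add_cancel]
  · rintro ⟨t, rfl⟩
    refine ⟨t - b + a, ?_⟩
    show φ (t - b + a) p = φ t q
    rw [hadd, h, ← hadd, sub_add_cancel]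

lemma orbit_compact (φ : ℝ → M → M) (hflow : IsFlow φ) {p : M}
    (hp : IsCriticalPt φ p) : IsCompact (orbitOf φ p) := by
  obtain ⟨hc, h0, hadd⟩ := hflow
  obtain ⟨T, hT, hTp⟩ := hp
  have hper : Function.Periodic (fun t => φ t p) T := by
    intro t
    simp only [hadd, hTp]
  have hcont : Continuous fun t : ℝ => φ t p :=
    hc.comp (continuous_id.prodMk continuous_const)
  have himg : (fun t : ℝ => φ t p) '' Set.Icc 0 (0 + T) = Set.range fun t : ℝ => φ t p :=
    hper.image_Icc hT 0
  have : orbitOf φ p = (fun t : ℝ => φ t p) '' Set.Icc 0 (0 + T) := himg.symm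
  rw [this]
  exact isCompact_Icc.image hcont

lemma weakspec_mixing (φ : ℝ → M → M) (hflow : IsFlow φ) (h : WeakSpec φ Set.univ) :
    TopMixingOn φ Set.univ := by
  intro U V hU hV hUne hVne
  obtain ⟨x, hxU, -⟩ := hUne
  obtain ⟨y, hyV, -⟩ := hVne
  obtain ⟨ε, hε, hεU⟩ := Metric.isOpen_iff.1 hU x hxU
  obtain ⟨δ, hδ, hδV⟩ := Metric.isOpen_iff.1 hV y hyV
  obtain ⟨K, hK, hspec⟩ := h (min ε δ) (lt_min hε hδ)
  refine ⟨K, hK, fun t ht => ?_⟩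
  obtain ⟨z, -, h1, h2⟩ := hspec 0 0 t t le_rfl le_rfl (by linarith) y trivial x trivial
  have hz1 : dist z y < min ε δ := by
    have := h1 0 ⟨le_rfl, le_rfl⟩
    simpa [hflow.2.1] using this
  have hz2 : dist (φ t z) x < min ε δ := by
    have := h2 t ⟨le_rfl, le_rfl⟩
    simpa [hflow.2.1] using this
  refine ⟨φ t z, ⟨z, ⟨hδV (lt_of_lt_of_le hz1 (min_le_right _ _)), trivial⟩, rfl⟩,
    hεU (lt_of_lt_of_le hz2 (min_le_left _ _)), trivial⟩

lemma ms_not_mixing [Nonempty M] (φ : ℝ → M → M) (hflow : IsFlow φ) (hMS : MorseSmaleLike φ)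
    (hnotorb : ∀ p : M, IsCriticalPt φ p → (Set.univ : Set M) ≠ orbitOf φ p) :
    ¬ TopMixingOn φ Set.univ := by
  classical
  intro hmix
  obtain ⟨hc, h0, hadd⟩ := hflow
  obtain ⟨F, hF, hNW⟩ := hMS
  -- every point is nonwandering
  have hNWuniv : (Set.univ : Set M) = NonWandering φ := by
    apply Set.eq_of_subset_of_subset _ (Set.subset_univ _)
    intro x _ U hUo hxU T
    obtain ⟨N, hN, hNt⟩ := hmix U U hUo hUo ⟨x, hxU, trivial⟩ ⟨x, hxU, trivial⟩
    refine ⟨max T N, le_max_left _ _, ?_⟩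
    have := hNt (max T N) (le_max_right _ _)
    simpa [Set.inter_univ] using this
  have huniv : (Set.univ : Set M) = ⋃ p ∈ F, orbitOf φ p := hNWuniv.trans hNW
  -- disjointness of distinct orbits
  have hdisj : ∀ p q : M, orbitOf φ p ≠ orbitOf φ q →
      ∀ x, x ∈ orbitOf φ p → x ∉ orbitOf φ q := by
    rintro p q hne x ⟨a, rfl⟩ ⟨b, hb⟩
    exact hne (orbit_eq_of_flow φ hadd hb.symm)
  -- some base orbit
  obtain ⟨x0⟩ := (inferInstance : Nonempty M)
  have hx0 : x0 ∈ ⋃ p ∈ F, orbitOf φ p := huniv ▸ Set.mem_univ x0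
  obtain ⟨p0, hp0F, hp0⟩ := Set.mem_iUnion₂.1 hx0
  by_cases hall : ∀ q ∈ F, orbitOf φ q = orbitOf φ p0
  · -- whole space is one orbit
    apply hnotorb p0 (hF p0 hp0F)
    apply Set.eq_of_subset_of_subset _ (Set.subset_univ _)
    intro y _
    have : y ∈ ⋃ p ∈ F, orbitOf φ p := huniv ▸ Set.mem_univ y
    obtain ⟨q, hqF, hq⟩ := Set.mem_iUnion₂.1 this
    exact (hall q hqF) ▸ hq
  · push_neg at hall
    obtain ⟨q0, hq0F, hq0ne⟩ := hall
    -- each orbit of a point of F is open (complement is finite union of closed orbits)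
    have hclosed : ∀ p ∈ F, IsClosed (orbitOf φ p) := fun p hp =>
      (orbit_compact φ ⟨hc, h0, hadd⟩ (hF p hp)).isClosed
    have hopen : ∀ p ∈ F, IsOpen (orbitOf φ p) := by
      intro p hp
      rw [← isClosed_compl_iff]
      have hcompl : (orbitOf φ p)ᶜ =
          ⋃ q ∈ F, (if orbitOf φ q = orbitOf φ p then (∅ : Set M) else orbitOf φ q) := by
        ext y
        simp only [Set.mem_compl_iff, Set.mem_iUnion₂, Set.mem_iUnion]
        constructor
        · intro hy
          have : y ∈ ⋃ r ∈ F, orbitOf φ r := huniv ▸ Set.mem_univ y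
          obtain ⟨r, hrF, hr⟩ := Set.mem_iUnion₂.1 this
          refine ⟨r, hrF, ?_⟩
          have hne : orbitOf φ r ≠ orbitOf φ p := fun he => hy (he ▸ hr)
          simp [hne, hr]
        · rintro ⟨r, hrF, hr⟩
          by_cases he : orbitOf φ r = orbitOf φ p
          · simp [he] at hr
          · simp only [if_neg he] at hr
            exact hdisj r p he y hr
      rw [hcompl]
      apply Set.Finite.isClosed_biUnion F.finite_toSet
      intro q hq
      split
      · exact isClosed_empty
      · exact hclosed q hq
    -- apply mixing to the two distinct orbits
    have hp0ne : (orbitOf φ p0 ∩ Set.univ).Nonempty :=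
      ⟨p0, ⟨0, h0 p0⟩, trivial⟩
    have hq0ne' : (orbitOf φ q0 ∩ Set.univ).Nonempty :=
      ⟨q0, ⟨0, h0 q0⟩, trivial⟩
    obtain ⟨N, hN, hNt⟩ := hmix (orbitOf φ p0) (orbitOf φ q0)
      (hopen p0 hp0F) (hopen q0 hq0F) hp0ne hq0ne'
    obtain ⟨w, ⟨v, ⟨⟨s, hv⟩, -⟩, rfl⟩, hw, -⟩ := hNt N le_rfl
    have hwq : φ N v ∈ orbitOf φ q0 := by
      refine ⟨N + s, ?_⟩
      show φ (N + s) q0 = φ N v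
      rw [hadd]
      exact congrArg (φ N) hv
    exact hdisj q0 p0 (fun he => hq0ne he) _ hwq hw

end Aux

/-- A Morse–Smale flow (on a closed surface, hence the whole space is never
a single critical orbit) cannot be topologically mixing; consequently no such flow has the
weak specification property. -/
theorem morse_smale_not_mixing_not_weak_specification
    {M : Type*} [MetricSpace M] [CompactSpace M] [Nonempty M]
    (φ : ℝ → M → M) (hflow : IsFlow φ) (hMS : MorseSmaleLike φ)
    (hnotorb : ∀ p : M, IsCriticalPt φ p → (Set.univ : Set M) ≠ orbitOf φ p) :
    ¬ TopMixingOn φ Set.univ ∧ ¬ WeakSpec φ Set.univ := by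
  have hnm := ms_not_mixing φ hflow hMS hnotorb
  exact ⟨hnm, fun hws => hnm (weakspec_mixing φ hflow hws)⟩
end

section
/- Let Λ be a compact invariant set with the weak specification property containing at least two distinct hyperbolic periodic orbits O(p) and O(q) of saddle type. For every ε ≤ min{ε(p), ε(q)} and corresponding spacing constant K = K(ε), there exists a point y ∈ W^{uu}_ε(p) with X_K(y) ∈ W^{ss}_ε(q); in particular W^u(O(p)) ∩ W^s(O(q)) ≠ ∅. -/
open Filter Set Metric TensorProduct

/-- Let `Λ` have the weak specification property and contain two distinct
hyperbolic periodic orbits `O(p)`, `O(q)` of saddle type. For every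
`ε ≤ min (ε(p)) (ε(q))` (the sizes given by the stable manifold theorem, so that the
local strong invariant manifolds of size `ε(p)`, `ε(q)` are contained in the global
ones) and every spacing constant `K` for `ε`, there is `y ∈ W^{uu}_ε(p)` with
`X_K(y) ∈ W^{ss}_ε(q)`; in particular `W^u(O(p)) ∩ W^s(O(q)) ≠ ∅`. -/
theorem local_manifolds_connected_by_specification
    {E : Type*} [NormedAddCommGroup E] [NormedSpace ℝ E] [FiniteDimensional ℝ E]
    (X : E → E) (φ : ℝ → E → E) (hX : ContDiff ℝ 1 X)
    (hflow : IsFlow φ) (hgen : GeneratedBy X φ)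
    (Λ : Set E) (hΛc : IsCompact Λ) (hΛi : InvariantSet φ Λ) (hweak : WeakSpec φ Λ)
    (p q : E) (hpΛ : p ∈ Λ) (hqΛ : q ∈ Λ)
    (hp : HypPeriodic X φ p) (hq : HypPeriodic X φ q)
    (hsp : IsSaddlePeriodic X φ p) (hsq : IsSaddlePeriodic X φ q)
    (hdistinct : orbitOf φ p ≠ orbitOf φ q)
    (εp εq : ℝ) (hεp : 0 < εp) (hεq : 0 < εq)
    (hlocp : ∀ y : E, (∀ t : ℝ, 0 ≤ t → dist (φ (-t) y) (φ (-t) p) ≤ εp) → y ∈ WuOrb φ p)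
    (hlocq : ∀ y : E, (∀ t : ℝ, 0 ≤ t → dist (φ t y) (φ t q) ≤ εq) → y ∈ WsOrb φ q)
    (ε K : ℝ) (hε : 0 < ε) (hεle : ε ≤ min εp εq) (hK : 0 < K)
    (hspec : SpecConst φ Λ ε K) :
    (∃ y : E, (∀ t : ℝ, 0 ≤ t → dist (φ (-t) y) (φ (-t) p) ≤ ε) ∧
      (∀ t : ℝ, 0 ≤ t → dist (φ t (φ K y)) (φ t q) ≤ ε)) ∧
    (WuOrb φ p ∩ WsOrb φ q).Nonempty := by
  obtain ⟨hcont, hzero, hadd⟩ := hflow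
  have hεp' : ε ≤ εp := le_trans hεle (min_le_left _ _)
  have hεq' : ε ≤ εq := le_trans hεle (min_le_right _ _)
  have hz : ∀ n : ℕ, ∃ yn ∈ Λ,
      (∀ t : ℝ, 0 ≤ t → t ≤ n → dist (φ (-t) yn) (φ (-t) p) < ε) ∧
      (∀ t : ℝ, 0 ≤ t → t ≤ n → dist (φ t (φ K yn)) (φ t q) < ε) := by
    intro n
    have hn : (0:ℝ) ≤ n := Nat.cast_nonneg n
    obtain ⟨z, hzΛ, h1, h2⟩ := hspec 0 n (n + K) (2*n + K)
      hn (by linarith) (by linarith)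
      (φ (-(n:ℝ)) p) (hΛi _ _ hpΛ) q hqΛ
    refine ⟨φ (n:ℝ) z, hΛi _ _ hzΛ, ?_, ?_⟩
    · intro t ht htn
      have h := h1 ((n:ℝ) - t) ⟨by linarith, by linarith⟩
      have e1 : φ (-t) (φ (n:ℝ) z) = φ ((n:ℝ) - t) z := by
        rw [← hadd]; ring_nf
      have e2 : φ ((n:ℝ) - t - 0) (φ (-(n:ℝ)) p) = φ (-t) p := by
        rw [← hadd]; ring_nf
      rw [e1]; rw [e2] at h; exact h
    · intro t ht htn
      have h := h2 (t + ((n:ℝ) + K)) ⟨by linarith, by linarith⟩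
      have e1 : φ t (φ K (φ (n:ℝ) z)) = φ (t + ((n:ℝ) + K)) z := by
        rw [← hadd, ← hadd]; ring_nf
      have e2 : φ (t + ((n:ℝ) + K) - ((n:ℝ) + K)) q = φ t q := by ring_nf
      rw [e1]; rw [e2] at h; exact h
  choose yn hynΛ h1 h2 using hz
  obtain ⟨y, hyΛ, σ, hσ, hconv⟩ := hΛc.tendsto_subseq hynΛ
  have hcφ : ∀ s : ℝ, Continuous fun x : E => φ s x := fun s =>
    hcont.comp (continuous_const.prodMk continuous_id)
  have hbig : ∀ t : ℝ, ∀ᶠ k in atTop, t ≤ ((σ k : ℕ) : ℝ) := by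
    intro t
    filter_upwards [eventually_ge_atTop ⌈t⌉₊] with k hk
    calc t ≤ (⌈t⌉₊ : ℝ) := Nat.le_ceil t
      _ ≤ (k : ℝ) := Nat.cast_le.mpr hk
      _ ≤ ((σ k : ℕ) : ℝ) := Nat.cast_le.mpr hσ.le_apply
  have hy1 : ∀ t : ℝ, 0 ≤ t → dist (φ (-t) y) (φ (-t) p) ≤ ε := by
    intro t ht
    have hc : Tendsto (fun k => dist (φ (-t) (yn (σ k))) (φ (-t) p)) atTop
        (nhds (dist (φ (-t) y) (φ (-t) p))) :=
      (((hcφ (-t)).dist continuous_const).continuousAt.tendsto).comp hconv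
    refine le_of_tendsto hc ?_
    filter_upwards [hbig t] with k hk
    exact (h1 (σ k) t ht hk).le
  have hy2 : ∀ t : ℝ, 0 ≤ t → dist (φ t (φ K y)) (φ t q) ≤ ε := by
    intro t ht
    have hc : Tendsto (fun k => dist (φ t (φ K (yn (σ k)))) (φ t q)) atTop
        (nhds (dist (φ t (φ K y)) (φ t q))) :=
      ((((hcφ t).comp (hcφ K)).dist continuous_const).continuousAt.tendsto).comp hconv
    refine le_of_tendsto hc ?_
    filter_upwards [hbig t] with k hk
    exact (h2 (σ k) t ht hk).le
  refine ⟨⟨y, hy1, hy2⟩, ?_⟩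
  have hyu : y ∈ WuOrb φ p :=
    hlocp y fun t ht => le_trans (hy1 t ht) hεp'
  have hys : φ K y ∈ WsOrb φ q :=
    hlocq (φ K y) fun t ht => le_trans (hy2 t ht) hεq'
  obtain ⟨_, ⟨s, rfl⟩, hmem⟩ := hys
  refine ⟨y, hyu, mem_iUnion.mpr ⟨s - K, ?_⟩⟩
  have hKt : Tendsto (fun t : ℝ => t - K) atTop atTop :=
    tendsto_atTop_add_const_right atTop (-K) tendsto_id
  simp only [Wss, mem_setOf_eq] at hmem ⊢
  have := hmem.comp hKt
  refine this.congr fun t => ?_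
  simp only [Function.comp]
  have e1 : φ (t - K) (φ K y) = φ t y := by rw [← hadd]; ring_nf
  have e2 : φ (t - K) (φ s q) = φ t (φ (s - K) q) := by
    rw [← hadd, ← hadd]; ring_nf
  rw [e1, e2]
end

section
/- Let Λ be a compact invariant set of a flow with a hyperbolic singularity σ such that every point of Λ belongs to W^s(σ) ∩ W^u(σ). If Λ contains two points p, q (distinct from σ) with disjoint orbits, then Λ is not topologically transitive. -/
open Filter Set Metric TensorProduct

lemma closure_range_subset_of_tendsto {M : Type*} [MetricSpace M] (f : ℝ → M)
    (hf : Continuous f) (σ : M) (h1 : Tendsto f atTop (nhds σ))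
    (h2 : Tendsto f atBot (nhds σ)) :
    closure (Set.range f) ⊆ Set.range f ∪ {σ} := by
  intro x hx
  by_cases hxσ : x = σ
  · exact Or.inr hxσ
  have hd0 : 0 < dist x σ := dist_pos.mpr hxσ
  obtain ⟨T1, hT1⟩ := eventually_atTop.mp (h1 (Metric.ball_mem_nhds σ (by positivity : (0:ℝ) < dist x σ / 2)))
  obtain ⟨T2, hT2⟩ := eventually_atBot.mp (h2 (Metric.ball_mem_nhds σ (by positivity : (0:ℝ) < dist x σ / 2)))
  set a := min T2 T1 with ha
  set b := max T2 T1 with hb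
  have hsub : Set.range f ⊆ f '' (Set.Icc a b) ∪ Metric.closedBall σ (dist x σ / 2) := by
    rintro _ ⟨t, rfl⟩
    by_cases ht : t ∈ Set.Icc a b
    · exact Or.inl ⟨t, ht, rfl⟩
    · right
      rw [Set.mem_Icc, not_and_or] at ht
      rcases ht with ht | ht
      · push_neg at ht
        have := hT2 t (le_of_lt (lt_of_lt_of_le ht (min_le_left _ _)))
        exact le_of_lt (Metric.mem_ball.mp this)
      · push_neg at ht
        have := hT1 t (le_of_lt (lt_of_le_of_lt (le_max_right _ _) ht))
        exact le_of_lt (Metric.mem_ball.mp this)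
  have hclosed : IsClosed (f '' (Set.Icc a b) ∪ Metric.closedBall σ (dist x σ / 2)) :=
    ((isCompact_Icc.image hf).isClosed).union Metric.isClosed_closedBall
  have hx2 := closure_minimal hsub hclosed hx
  rcases hx2 with hx2 | hx2
  · exact Or.inl (Set.image_subset_range f _ hx2)
  · exfalso
    have : dist x σ ≤ dist x σ / 2 := Metric.mem_closedBall.mp hx2
    linarith

/-- If a compact invariant set `Λ` has a hyperbolic singularity `σ` with
`Λ ⊆ W^s(σ) ∩ W^u(σ)` and contains two points `p, q ≠ σ` with disjoint orbits, then the
flow on `Λ` is not topologically transitive. -/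
theorem not_transitive_of_two_homoclinic_orbits
    {E : Type*} [NormedAddCommGroup E] [NormedSpace ℝ E] [FiniteDimensional ℝ E]
    (X : E → E) (φ : ℝ → E → E) (hX : ContDiff ℝ 1 X)
    (hflow : IsFlow φ) (hgen : GeneratedBy X φ)
    (Λ : Set E) (hΛc : IsCompact Λ) (hΛi : InvariantSet φ Λ)
    (σ : E) (hσΛ : σ ∈ Λ) (hσ : HypSing X σ)
    (hall : ∀ x ∈ Λ, x ∈ WsPoint φ σ ∩ WuPoint φ σ)
    (p q : E) (hpΛ : p ∈ Λ) (hqΛ : q ∈ Λ) (hpσ : p ≠ σ) (hqσ : q ≠ σ)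
    (hdisj : orbitOf φ p ∩ orbitOf φ q = ∅) :
    ¬ TopTransOn φ Λ := by
  intro htrans
  obtain ⟨hcont, hzero, hadd⟩ := hflow
  haveI : CompactSpace ↥Λ := isCompact_iff_compactSpace.mp hΛc
  haveI : Nonempty ↥Λ := ⟨⟨σ, hσΛ⟩⟩
  set c : ℕ → ↥Λ := TopologicalSpace.denseSeq ↥Λ with hcdef
  have hc : DenseRange c := TopologicalSpace.denseRange_denseSeq ↥Λ
  set G : ℕ × ℕ → Set ↥Λ :=
    fun nm => {z : ↥Λ | ∃ t : ℝ, 0 < t ∧ dist (φ t ↑z) ↑(c nm.1) < 1 / (nm.2 + 1)} with hGdef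
  have hGopen : ∀ nm, IsOpen (G nm) := by
    intro nm
    have : G nm = ⋃ t ∈ Set.Ioi (0:ℝ),
        (fun z : ↥Λ => φ t ↑z) ⁻¹' Metric.ball (↑(c nm.1)) (1 / (nm.2 + 1)) := by
      ext z
      simp [hGdef, Metric.mem_ball]
    rw [this]
    refine isOpen_biUnion fun t _ => Metric.isOpen_ball.preimage ?_
    exact hcont.comp (continuous_const.prodMk continuous_subtype_val)
  have hGdense : ∀ nm, Dense (G nm) := by
    intro nm
    rw [dense_iff_inter_open]
    intro W hW hWne
    obtain ⟨V, hV, rfl⟩ := isOpen_induced_iff.mp hW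
    obtain ⟨w, hw⟩ := hWne
    have hr : 0 < 1 / ((nm.2 : ℝ) + 1) := by positivity
    obtain ⟨t, ht, y, ⟨x, ⟨hxV, hxΛ⟩, hxy⟩, hyball, -⟩ :=
      htrans (Metric.ball (↑(c nm.1)) (1 / (nm.2 + 1))) V Metric.isOpen_ball hV
        ⟨↑(c nm.1), Metric.mem_ball_self hr, (c nm.1).2⟩ ⟨↑w, hw, w.2⟩
    exact ⟨⟨x, hxΛ⟩, hxV, t, ht, by rw [hxy]; exact hyball⟩
  obtain ⟨z, hz⟩ := (dense_iInter_of_isOpen hGopen hGdense).nonempty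
  have hzmem := Set.mem_iInter.mp hz
  -- forward orbit of z is dense in Λ
  have hdense : ∀ x ∈ Λ, ∀ ε : ℝ, 0 < ε → ∃ t : ℝ, dist (φ t ↑z) x < ε := by
    intro x hx ε hε
    obtain ⟨b, ⟨n, rfl⟩, hb⟩ := Metric.mem_closure_iff.mp (hc ⟨x, hx⟩) (ε / 2) (by linarith)
    obtain ⟨m, hm⟩ := exists_nat_one_div_lt (show (0:ℝ) < ε / 2 by linarith)
    obtain ⟨t, -, htd⟩ := hzmem (n, m)
    refine ⟨t, ?_⟩
    have hbx : dist (↑(c n)) x < ε / 2 := by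
      rw [dist_comm]
      simpa [Subtype.dist_eq] using hb
    have : (1 : ℝ) / (m + 1) < ε / 2 := by exact_mod_cast hm
    calc dist (φ t ↑z) x ≤ dist (φ t ↑z) ↑(c n) + dist (↑(c n)) x := dist_triangle _ _ _
      _ < ε / 2 + ε / 2 := by exact add_lt_add (lt_trans htd this) hbx
      _ = ε := by ring
  have key : ∀ x ∈ Λ, x ≠ σ → ∃ t : ℝ, φ t ↑z = x := by
    intro x hx hxσ
    have hxcl : x ∈ closure (Set.range fun t : ℝ => φ t ↑z) := by
      rw [Metric.mem_closure_iff]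
      intro ε hε
      obtain ⟨t, htd⟩ := hdense x hx ε hε
      exact ⟨φ t ↑z, ⟨t, rfl⟩, by rwa [dist_comm]⟩
    have hfc : Continuous fun t : ℝ => φ t (↑z : E) :=
      hcont.comp (continuous_id.prodMk continuous_const)
    have := closure_range_subset_of_tendsto _ hfc σ (hall ↑z z.2).1 (hall ↑z z.2).2 hxcl
    rcases this with h | h
    · exact h
    · exact absurd h hxσ
  obtain ⟨t1, ht1⟩ := key p hpΛ hpσ
  obtain ⟨t2, ht2⟩ := key q hqΛ hqσ
  have hqp : q ∈ orbitOf φ p := by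
    refine ⟨t2 - t1, ?_⟩
    show φ (t2 - t1) p = q
    rw [← ht1, ← hadd, sub_add_cancel, ht2]
  have hqq : q ∈ orbitOf φ q := ⟨0, hzero q⟩
  exact Set.eq_empty_iff_forall_notMem.mp hdisj q ⟨hqp, hqq⟩
end
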